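/- There is an absolute constant C > 0 such that for every pair of natural numbers s, t with t ≤ s and every real 0 < β ≤ 1, there exists a natural number d ≤ C·(t + log₂(1/β) + 1) and an average-case (s−t, β)-extractor Ext : {0,1}^s × {0,1}^d → {0,1}^s. -/

import Mathlib

open Classical

/-- Probability of `P` under the uniform distribution on a finite type. -/
noncomputable def pr {α : Type*} [Fintype α] (P : α → Prop) : ℝ :=
  ((Finset.univ.filter P).card : ℝ) / (Fintype.card α : ℝ)

/-- `f : {0,1}^n → ℝ^d` is `(ε,δ)`-concentrated at `μ`. -/
def Concentrated (n d : ℕ) (ε δ : ℝ)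
    (f : (Fin n → Bool) → Fin d → ℝ) (μ : Fin d → ℝ) : Prop :=
  pr (fun X : Fin n → Bool => ∃ j, |f X j - μ j| > ε) ≤ δ

/-- A deterministic owner for `k` rounds of `(ε,δ)`-concentrated functions
`{0,1}^n → ℝ^d`: given the history of responses `Y_1,…,Y_{i-1}`, it produces
a function `f_i` together with a point `μ_i` at which `f_i` is concentrated. -/
structure Owner (n k d : ℕ) (ε δ : ℝ) where
  act : List (Fin d → ℝ) → (((Fin n → Bool) → Fin d → ℝ) × (Fin d → ℝ))
  conc : ∀ ys : List (Fin d → ℝ), ys.length < k →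
    Concentrated n d ε δ (act ys).1 (act ys).2

/-- A one-query steward with randomness complexity `m`: in each round it chooses
a query point from its randomness and the past query answers, and it chooses a
response from its randomness and the past and current query answers. -/
structure Steward (n k d m : ℕ) where
  q : (Fin m → Bool) → List (Fin d → ℝ) → (Fin n → Bool)
  r : (Fin m → Bool) → List (Fin d → ℝ) → (Fin d → ℝ) → (Fin d → ℝ)

/-- The interaction `O ↔ S(Z)` for `i` rounds: the list of triples `(Y_i, W_i, μ_i)`. -/
noncomputable def run {n k d m : ℕ} {ε δ : ℝ} (O : Owner n k d ε δ) (S : Steward n k d m)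
    (Z : Fin m → Bool) : ℕ → List ((Fin d → ℝ) × (Fin d → ℝ) × (Fin d → ℝ))
  | 0 => []
  | i + 1 =>
    let h := run O S Z i
    let fμ := O.act (h.map fun p => p.1)
    let X := S.q Z (h.map fun p => p.2.1)
    let W := fμ.1 X
    h ++ [(S.r Z (h.map fun p => p.2.1) W, W, fμ.2)]

/-- `S` is a one-query `(ε',δ')`-steward for `k` adaptively chosen
`(ε,δ)`-concentrated functions `{0,1}^n → ℝ^d`. -/
def IsSteward (n k d m : ℕ) (ε δ ε' δ' : ℝ) (S : Steward n k d m) : Prop :=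
  ∀ O : Owner n k d ε δ,
    pr (fun Z : Fin m → Bool =>
      ∃ p ∈ run O S Z k, ∃ j : Fin d, |p.1 j - p.2.2 j| > ε') ≤ δ'

/-- `prMass p P`: probability of the event `P` under the mass function `p`. -/
noncomputable def prMass {Ω : Type*} [Fintype Ω] (p : Ω → ℝ) (P : Ω → Prop) : ℝ :=
  ∑ ω ∈ Finset.univ.filter P, p ω

/-- `Ext : {0,1}^s × {0,1}^d → {0,1}^m` is an average-case `(κ, β)`-extractor:
for every pair of random variables `(X, V)` on a common finite probability space
with `H̃_∞(X|V) ≥ κ` (equivalently, `E_{v∼V}[max_x Pr[X=x | V=v]] ≤ 2^{-κ}`),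
the joint distributions of `(V, Ext(X,Y))` (with `Y` uniform, independent of `(X,V)`)
and `(V, Z)` (with `Z` uniform, independent of `V`) are `β`-close in total variation. -/
def IsAvgExtractor (s d m : ℕ) (κ β : ℝ)
    (Ext : (Fin s → Bool) → (Fin d → Bool) → (Fin m → Bool)) : Prop :=
  ∀ (Ω : Type) [Fintype Ω] (Vt : Type) [Fintype Vt]
    (p : Ω → ℝ) (X : Ω → (Fin s → Bool)) (V : Ω → Vt),
    (∀ ω, 0 ≤ p ω) → (∑ ω, p ω) = 1 →
    (∑ v : Vt, ⨆ x : Fin s → Bool, prMass p (fun ω => X ω = x ∧ V ω = v)) ≤ (2 : ℝ) ^ (-κ) →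
    (1 / 2) * ∑ v : Vt, ∑ z : Fin m → Bool,
      |(∑ y : Fin d → Bool, prMass p (fun ω => V ω = v ∧ Ext (X ω) y = z)) / 2 ^ d
        - prMass p (fun ω => V ω = v) / 2 ^ m| ≤ β


namespace AvgExtAux

open Finset

set_option maxHeartbeats 1000000

noncomputable def xi (s : ℕ) (T : Finset (Fin s → Bool)) (z : Fin s → Bool) : ℝ :=
  (if z ∈ T then (1 : ℝ) else 0) - (T.card : ℝ) / 2 ^ s

noncomputable def Dsum (s d : ℕ) (S T : Finset (Fin s → Bool))
    (G : (Fin s → Bool) × (Fin d → Bool) → (Fin s → Bool)) : ℝ :=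
  ∑ p : (Fin s → Bool) × (Fin d → Bool), if p.1 ∈ S then xi s T (G p) else 0

lemma card_univ_pow (s : ℕ) : ((Finset.univ : Finset (Fin s → Bool)).card : ℝ) = 2 ^ s := by
  rw [Finset.card_univ]
  norm_cast
  simp

lemma card_le_pow {s : ℕ} (T : Finset (Fin s → Bool)) : (T.card : ℝ) ≤ 2 ^ s := by
  rw [← card_univ_pow s]
  exact_mod_cast Finset.card_le_univ T

lemma xi_abs_le {s : ℕ} (T : Finset (Fin s → Bool)) (z : Fin s → Bool) : |xi s T z| ≤ 1 := by
  have h1 : (0:ℝ) ≤ (T.card : ℝ) / 2 ^ s := by positivity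
  have h2 : (T.card : ℝ) / 2 ^ s ≤ 1 := by
    rw [div_le_one (by positivity)]; exact card_le_pow T
  rw [abs_le, xi]
  split <;> constructor <;> linarith

lemma sum_xi_zero {s : ℕ} (T : Finset (Fin s → Bool)) : ∑ z, xi s T z = 0 := by
  have h1 : ∑ z : Fin s → Bool, (if z ∈ T then (1:ℝ) else 0) = T.card := by
    simp [Finset.sum_ite_mem]
  unfold xi
  rw [Finset.sum_sub_distrib, h1, Finset.sum_const, nsmul_eq_mul, card_univ_pow s]
  field_simp
  ring

lemma sum_exp_xi_le {s : ℕ} (T : Finset (Fin s → Bool)) (l : ℝ) :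
    ∑ z : Fin s → Bool, Real.exp (l * xi s T z) ≤ (2 ^ s : ℝ) * Real.exp (l ^ 2 / 2) := by
  have key : ∀ z, Real.exp (l * xi s T z)
      ≤ (1 + xi s T z) / 2 * Real.exp l + (1 - xi s T z) / 2 * Real.exp (-l) := by
    intro z
    have hz := xi_abs_le T z
    rw [abs_le] at hz
    have ha : (0:ℝ) ≤ (1 + xi s T z) / 2 := by linarith
    have hb : (0:ℝ) ≤ (1 - xi s T z) / 2 := by linarith
    have hab : (1 + xi s T z) / 2 + (1 - xi s T z) / 2 = 1 := by ring
    have := convexOn_exp.2 (Set.mem_univ l) (Set.mem_univ (-l)) ha hb hab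
    simp only [smul_eq_mul] at this
    calc Real.exp (l * xi s T z)
        = Real.exp ((1 + xi s T z) / 2 * l + (1 - xi s T z) / 2 * -l) := by ring_nf
      _ ≤ (1 + xi s T z) / 2 * Real.exp l + (1 - xi s T z) / 2 * Real.exp (-l) := this
  calc ∑ z : Fin s → Bool, Real.exp (l * xi s T z)
      ≤ ∑ z : Fin s → Bool, ((1 + xi s T z) / 2 * Real.exp l + (1 - xi s T z) / 2 * Real.exp (-l)) :=
        Finset.sum_le_sum fun z _ => key z
    _ = (2 ^ s : ℝ) * ((Real.exp l + Real.exp (-l)) / 2) := by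
        rw [Finset.sum_add_distrib]
        rw [← Finset.sum_mul, ← Finset.sum_mul]
        have e1 : ∑ z : Fin s → Bool, (1 + xi s T z) / 2 = (2 ^ s : ℝ) / 2 := by
          rw [← Finset.sum_div, Finset.sum_add_distrib, sum_xi_zero, Finset.sum_const,
            nsmul_eq_mul, mul_one]
          rw [show ((Finset.univ : Finset (Fin s → Bool)).card : ℝ) + 0 = (Finset.univ : Finset (Fin s → Bool)).card by ring, card_univ_pow s]
        have e2 : ∑ z : Fin s → Bool, (1 - xi s T z) / 2 = (2 ^ s : ℝ) / 2 := by
          rw [← Finset.sum_div, Finset.sum_sub_distrib, sum_xi_zero, Finset.sum_const,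
            nsmul_eq_mul, mul_one]
          rw [show ((Finset.univ : Finset (Fin s → Bool)).card : ℝ) - 0 = (Finset.univ : Finset (Fin s → Bool)).card by ring, card_univ_pow s]
        rw [e1, e2]; ring
    _ ≤ (2 ^ s : ℝ) * Real.exp (l ^ 2 / 2) := by
        have : (Real.exp l + Real.exp (-l)) / 2 = Real.cosh l := (Real.cosh_eq l).symm
        rw [this]
        have := Real.cosh_le_exp_half_sq l
        have h2 : (0:ℝ) ≤ (2 ^ s : ℝ) := by positivity
        exact mul_le_mul_of_nonneg_left this h2



lemma card_bad_le (s d : ℕ) (S T : Finset (Fin s → Bool)) (a : ℝ) (ha : 0 < a)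
    (hS : S.Nonempty) :
    (((Finset.univ.filter fun G : (Fin s → Bool) × (Fin d → Bool) → (Fin s → Bool) =>
      a < Dsum s d S T G)).card : ℝ)
      ≤ (Fintype.card ((Fin s → Bool) × (Fin d → Bool) → (Fin s → Bool)) : ℝ) *
        Real.exp (-(a ^ 2 / (2 * (S.card * 2 ^ d)))) := by
  set N : ℝ := S.card * 2 ^ d with hN
  have hNpos : 0 < N := by
    have h0 : 0 < S.card := Finset.card_pos.mpr hS
    have h0' : (0:ℝ) < S.card := by exact_mod_cast h0
    positivity
  set l : ℝ := a / N with hl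
  have hlpos : 0 < l := div_pos ha hNpos
  set f : ((Fin s → Bool) × (Fin d → Bool)) → (Fin s → Bool) → ℝ :=
    fun p z => if p.1 ∈ S then Real.exp (l * xi s T z) else 1 with hf
  have hexp : ∀ G : (Fin s → Bool) × (Fin d → Bool) → (Fin s → Bool),
      Real.exp (l * Dsum s d S T G) = ∏ p, f p (G p) := by
    intro G
    rw [Dsum, Finset.mul_sum, Real.exp_sum]
    refine Finset.prod_congr rfl fun p _ => ?_
    by_cases h : p.1 ∈ S <;> simp [hf, h]
  have step1 : ((Finset.univ.filter fun G : (Fin s → Bool) × (Fin d → Bool) → (Fin s → Bool) =>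
      a < Dsum s d S T G).card : ℝ) * Real.exp (l * a)
      ≤ ∑ G : (Fin s → Bool) × (Fin d → Bool) → (Fin s → Bool),
          Real.exp (l * Dsum s d S T G) := by
    calc ((Finset.univ.filter fun G : (Fin s → Bool) × (Fin d → Bool) → (Fin s → Bool) =>
        a < Dsum s d S T G).card : ℝ) * Real.exp (l * a)
        = ∑ _G ∈ (Finset.univ.filter fun G : (Fin s → Bool) × (Fin d → Bool) → (Fin s → Bool) =>
            a < Dsum s d S T G), Real.exp (l * a) := by
          rw [Finset.sum_const, nsmul_eq_mul]
      _ ≤ ∑ G ∈ (Finset.univ.filter fun G : (Fin s → Bool) × (Fin d → Bool) → (Fin s → Bool) =>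
            a < Dsum s d S T G), Real.exp (l * Dsum s d S T G) := by
          refine Finset.sum_le_sum fun G hG => ?_
          rw [Finset.mem_filter] at hG
          exact Real.exp_le_exp.mpr (mul_le_mul_of_nonneg_left hG.2.le hlpos.le)
      _ ≤ ∑ G : (Fin s → Bool) × (Fin d → Bool) → (Fin s → Bool),
            Real.exp (l * Dsum s d S T G) := by
          refine Finset.sum_le_sum_of_subset_of_nonneg (Finset.filter_subset _ _)
            fun G _ _ => (Real.exp_pos _).le
  have step2 : (∑ G : (Fin s → Bool) × (Fin d → Bool) → (Fin s → Bool),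
      Real.exp (l * Dsum s d S T G)) = ∏ p, ∑ z, f p z := by
    rw [Fintype.prod_sum f]
    exact Finset.sum_congr rfl fun G _ => hexp G
  have step3 : (∏ p : (Fin s → Bool) × (Fin d → Bool), ∑ z, f p z)
      ≤ (Fintype.card ((Fin s → Bool) × (Fin d → Bool) → (Fin s → Bool)) : ℝ) *
        Real.exp (N * l ^ 2 / 2) := by
    have hfactor : ∀ p : (Fin s → Bool) × (Fin d → Bool),
        ∑ z, f p z ≤ (2 ^ s : ℝ) * Real.exp (if p.1 ∈ S then l ^ 2 / 2 else 0) := by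
      intro p
      by_cases h : p.1 ∈ S
      · simpa [hf, h] using sum_exp_xi_le T l
      · simp only [hf, h, if_false]
        rw [Finset.sum_const, nsmul_eq_mul, mul_one, Real.exp_zero, mul_one, card_univ_pow]
    have hnn : ∀ p : (Fin s → Bool) × (Fin d → Bool), p ∈ Finset.univ → (0:ℝ) ≤ ∑ z, f p z := by
      intro p _
      refine Finset.sum_nonneg fun z _ => ?_
      by_cases h : p.1 ∈ S <;> simp [hf, h] <;> positivity
    calc (∏ p : (Fin s → Bool) × (Fin d → Bool), ∑ z, f p z)
        ≤ ∏ p : (Fin s → Bool) × (Fin d → Bool),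
            (2 ^ s : ℝ) * Real.exp (if p.1 ∈ S then l ^ 2 / 2 else 0) :=
          Finset.prod_le_prod hnn fun p _ => hfactor p
      _ = (Fintype.card ((Fin s → Bool) × (Fin d → Bool) → (Fin s → Bool)) : ℝ) *
            Real.exp (N * l ^ 2 / 2) := by
          rw [Finset.prod_mul_distrib, Finset.prod_const, ← Real.exp_sum]
          have hc : ((2:ℝ) ^ s) ^ (Finset.univ : Finset ((Fin s → Bool) × (Fin d → Bool))).card
              = (Fintype.card ((Fin s → Bool) × (Fin d → Bool) → (Fin s → Bool)) : ℝ) := by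
            rw [Fintype.card_fun]
            rw [Finset.card_univ]
            push_cast
            simp
          have hs : (∑ p : (Fin s → Bool) × (Fin d → Bool),
              (if p.1 ∈ S then l ^ 2 / 2 else 0)) = N * l ^ 2 / 2 := by
            rw [Fintype.sum_prod_type]
            have : ∀ x : Fin s → Bool, (∑ _y : Fin d → Bool,
                (if x ∈ S then l ^ 2 / 2 else 0)) = if x ∈ S then (2^d : ℝ) * (l ^ 2/2) else 0 := by
              intro x
              by_cases h : x ∈ S
              · rw [if_pos h, Finset.sum_const, nsmul_eq_mul, if_pos h, Finset.card_univ]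
                norm_cast
                simp
              · simp [h]
            rw [Finset.sum_congr rfl fun x _ => this x]
            rw [Finset.sum_ite_mem, Finset.univ_inter, Finset.sum_const, nsmul_eq_mul, hN]
            ring
          rw [hc, hs]
  have hfinal : ((Finset.univ.filter fun G : (Fin s → Bool) × (Fin d → Bool) → (Fin s → Bool) =>
      a < Dsum s d S T G).card : ℝ)
      ≤ (Fintype.card ((Fin s → Bool) × (Fin d → Bool) → (Fin s → Bool)) : ℝ) *
        Real.exp (N * l ^ 2 / 2) * Real.exp (-(l * a)) := by
    have h := le_trans step1 (le_of_le_of_eq step2.le (rfl)) |>.trans step3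
    have hpos := Real.exp_pos (l * a)
    calc ((Finset.univ.filter fun G : (Fin s → Bool) × (Fin d → Bool) → (Fin s → Bool) =>
        a < Dsum s d S T G).card : ℝ)
        = ((Finset.univ.filter fun G : (Fin s → Bool) × (Fin d → Bool) → (Fin s → Bool) =>
            a < Dsum s d S T G).card : ℝ) * Real.exp (l * a) * Real.exp (-(l * a)) := by
          rw [mul_assoc, ← Real.exp_add, add_neg_cancel, Real.exp_zero, mul_one]
      _ ≤ (Fintype.card ((Fin s → Bool) × (Fin d → Bool) → (Fin s → Bool)) : ℝ) *
            Real.exp (N * l ^ 2 / 2) * Real.exp (-(l * a)) := by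
          exact mul_le_mul_of_nonneg_right h (Real.exp_pos _).le
  calc ((Finset.univ.filter fun G : (Fin s → Bool) × (Fin d → Bool) → (Fin s → Bool) =>
      a < Dsum s d S T G).card : ℝ)
      ≤ (Fintype.card ((Fin s → Bool) × (Fin d → Bool) → (Fin s → Bool)) : ℝ) *
        Real.exp (N * l ^ 2 / 2) * Real.exp (-(l * a)) := hfinal
    _ = (Fintype.card ((Fin s → Bool) × (Fin d → Bool) → (Fin s → Bool)) : ℝ) *
        Real.exp (-(a ^ 2 / (2 * N))) := by
        rw [mul_assoc, ← Real.exp_add]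
        congr 1
        rw [hl]
        field_simp
        ring


lemma exists_good (s d : ℕ) (β K₀ : ℝ) (hβ : 0 < β) (hK : 0 < K₀)
    (hcond : ((2 : ℝ) ^ (2 ^ s) * (2 : ℝ) ^ (2 ^ s)) *
        Real.exp (-(β ^ 2 * K₀ * 2 ^ d / 8)) < 1) :
    ∃ G : (Fin s → Bool) × (Fin d → Bool) → (Fin s → Bool),
      ∀ S T : Finset (Fin s → Bool),
        Dsum s d S T G ≤ β / 4 * (S.card + K₀) * 2 ^ d := by
  by_contra hcon
  push_neg at hcon
  -- each G is in some bad set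
  set bad : Finset (Fin s → Bool) × Finset (Fin s → Bool) →
      Finset ((Fin s → Bool) × (Fin d → Bool) → (Fin s → Bool)) :=
    fun ST => Finset.univ.filter fun G =>
      β / 4 * (ST.1.card + K₀) * 2 ^ d < Dsum s d ST.1 ST.2 G with hbad
  have hcover : (Finset.univ : Finset ((Fin s → Bool) × (Fin d → Bool) → (Fin s → Bool)))
      ⊆ Finset.univ.biUnion bad := by
    intro G _
    obtain ⟨S, T, hST⟩ := hcon G
    exact Finset.mem_biUnion.mpr ⟨(S, T), Finset.mem_univ _,
      Finset.mem_filter.mpr ⟨Finset.mem_univ _, hST⟩⟩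
  have hcard := Finset.card_le_card hcover
  have hcard2 := le_trans hcard (Finset.card_biUnion_le)
  -- bound each bad set
  have hper : ∀ ST : Finset (Fin s → Bool) × Finset (Fin s → Bool),
      ((bad ST).card : ℝ)
      ≤ (Fintype.card ((Fin s → Bool) × (Fin d → Bool) → (Fin s → Bool)) : ℝ) *
        Real.exp (-(β ^ 2 * K₀ * 2 ^ d / 8)) := by
    intro ⟨S, T⟩
    set a : ℝ := β / 4 * (S.card + K₀) * 2 ^ d with haa
    have ha : 0 < a := by
      have h1 : (0:ℝ) ≤ S.card := by positivity
      have : (0:ℝ) < (S.card + K₀) := by linarith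
      positivity
    rcases S.eq_empty_or_nonempty with hSe | hSne
    · have : bad (S, T) = ∅ := by
        rw [hbad]
        apply Finset.filter_false_of_mem
        intro G _
        have hD : Dsum s d S T G = 0 := by
          rw [hSe, Dsum]
          apply Finset.sum_eq_zero
          intro p _
          simp
        rw [not_lt, hD]
        exact ha.le
      rw [this]
      simp only [Finset.card_empty, Nat.cast_zero]
      positivity
    · have hb := card_bad_le s d S T a ha hSne
      refine le_trans hb (mul_le_mul_of_nonneg_left ?_ (by positivity))
      rw [Real.exp_le_exp]
      rw [neg_le_neg_iff]
      -- β²K₀2^d/8 ≤ a²/(2(c2^d))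
      have hc1 : (1:ℝ) ≤ S.card := by exact_mod_cast Finset.card_pos.mpr hSne
      have hd0 : (0:ℝ) < 2 ^ d := by positivity
      rw [div_le_div_iff₀ (by norm_num) (by positivity)]
      have hsq : 4 * ((S.card:ℝ) * K₀) ≤ ((S.card:ℝ) + K₀) ^ 2 := by nlinarith [sq_nonneg ((S.card:ℝ) - K₀)]
      have expand : a ^ 2 = (β/4)^2 * ((S.card:ℝ) + K₀)^2 * (2^d)^2 := by rw [haa]; ring
      rw [expand]
      have h2 : (β/4)^2 * (4 * ((S.card:ℝ) * K₀)) * (2^d)^2 ≤ (β/4)^2 * ((S.card:ℝ)+K₀)^2 * (2^d)^2 := by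
        have : (0:ℝ) ≤ (β/4)^2 * (2^d)^2 := by positivity
        nlinarith [this]
      refine le_trans (le_of_eq ?_) (mul_le_mul_of_nonneg_right h2 (by positivity))
      ring
  -- combine
  have hsum : ((Finset.univ.biUnion bad).card : ℝ)
      ≤ ∑ ST : Finset (Fin s → Bool) × Finset (Fin s → Bool), ((bad ST).card : ℝ) := by
    calc ((Finset.univ.biUnion bad).card : ℝ)
        ≤ ((∑ ST : Finset (Fin s → Bool) × Finset (Fin s → Bool), (bad ST).card : ℕ) : ℝ) := by
          exact_mod_cast Finset.card_biUnion_le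
      _ = ∑ ST : Finset (Fin s → Bool) × Finset (Fin s → Bool), ((bad ST).card : ℝ) := by
          push_cast; ring
  have hQ : (Fintype.card ((Fin s → Bool) × (Fin d → Bool) → (Fin s → Bool)) : ℝ)
      ≤ ((2 : ℝ) ^ (2 ^ s) * (2 : ℝ) ^ (2 ^ s)) *
        ((Fintype.card ((Fin s → Bool) × (Fin d → Bool) → (Fin s → Bool)) : ℝ) *
          Real.exp (-(β ^ 2 * K₀ * 2 ^ d / 8))) := by
    calc (Fintype.card ((Fin s → Bool) × (Fin d → Bool) → (Fin s → Bool)) : ℝ)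
        = ((Finset.univ : Finset ((Fin s → Bool) × (Fin d → Bool) → (Fin s → Bool))).card : ℝ) := by
          rw [Finset.card_univ]
      _ ≤ ((Finset.univ.biUnion bad).card : ℝ) := by exact_mod_cast hcard
      _ ≤ ∑ ST : Finset (Fin s → Bool) × Finset (Fin s → Bool), ((bad ST).card : ℝ) := hsum
      _ ≤ ∑ _ST : Finset (Fin s → Bool) × Finset (Fin s → Bool),
            ((Fintype.card ((Fin s → Bool) × (Fin d → Bool) → (Fin s → Bool)) : ℝ) *
              Real.exp (-(β ^ 2 * K₀ * 2 ^ d / 8))) := Finset.sum_le_sum fun ST _ => hper ST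
      _ = ((2 : ℝ) ^ (2 ^ s) * (2 : ℝ) ^ (2 ^ s)) *
            ((Fintype.card ((Fin s → Bool) × (Fin d → Bool) → (Fin s → Bool)) : ℝ) *
              Real.exp (-(β ^ 2 * K₀ * 2 ^ d / 8))) := by
          rw [Finset.sum_const, nsmul_eq_mul, Finset.card_univ]
          congr 1
          have hcf : Fintype.card (Fin s → Bool) = 2 ^ s := by simp
          rw [Fintype.card_prod, Fintype.card_finset, hcf]
          push_cast
          ring
  have hFpos : (0:ℝ) < (Fintype.card ((Fin s → Bool) × (Fin d → Bool) → (Fin s → Bool)) : ℝ) := by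
    have : 0 < Fintype.card ((Fin s → Bool) × (Fin d → Bool) → (Fin s → Bool)) :=
      Fintype.card_pos
    exact_mod_cast this
  nlinarith [hQ, hFpos, hcond, mul_pos hFpos (Real.exp_pos (-(β ^ 2 * K₀ * 2 ^ d / 8)))]



noncomputable def ErrA (s d : ℕ) (G : (Fin s → Bool) × (Fin d → Bool) → (Fin s → Bool))
    (q : (Fin s → Bool) → ℝ) (z : Fin s → Bool) : ℝ :=
  (∑ y : Fin d → Bool, ∑ x : Fin s → Bool, if G (x, y) = z then q x else 0) / 2 ^ d
    - (∑ x, q x) / 2 ^ s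

noncomputable def Err (s d : ℕ) (G : (Fin s → Bool) × (Fin d → Bool) → (Fin s → Bool))
    (q : (Fin s → Bool) → ℝ) : ℝ :=
  2⁻¹ * ∑ z, |ErrA s d G q z|

lemma ErrA_add (s d : ℕ) (G : (Fin s → Bool) × (Fin d → Bool) → (Fin s → Bool))
    (q1 q2 : (Fin s → Bool) → ℝ) (z : Fin s → Bool) :
    ErrA s d G (fun x => q1 x + q2 x) z = ErrA s d G q1 z + ErrA s d G q2 z := by
  unfold ErrA
  have h : ∀ y x, (if G (x, y) = z then q1 x + q2 x else 0)
      = (if G (x, y) = z then q1 x else 0) + (if G (x, y) = z then q2 x else 0) := by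
    intro y x; split <;> simp
  simp_rw [h, Finset.sum_add_distrib]
  ring

lemma ErrA_smul (s d : ℕ) (G : (Fin s → Bool) × (Fin d → Bool) → (Fin s → Bool))
    (c : ℝ) (q : (Fin s → Bool) → ℝ) (z : Fin s → Bool) :
    ErrA s d G (fun x => c * q x) z = c * ErrA s d G q z := by
  unfold ErrA
  have h : ∀ y x, (if G (x, y) = z then c * q x else 0)
      = c * (if G (x, y) = z then q x else 0) := by
    intro y x; split <;> simp
  simp_rw [h, ← Finset.mul_sum]
  ring

lemma Err_add_le (s d : ℕ) (G : (Fin s → Bool) × (Fin d → Bool) → (Fin s → Bool))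
    (q1 q2 : (Fin s → Bool) → ℝ) :
    Err s d G (fun x => q1 x + q2 x) ≤ Err s d G q1 + Err s d G q2 := by
  unfold Err
  rw [← mul_add, ← Finset.sum_add_distrib]
  refine mul_le_mul_of_nonneg_left (Finset.sum_le_sum fun z _ => ?_) (by norm_num)
  rw [ErrA_add]
  exact abs_add_le _ _

lemma Err_smul (s d : ℕ) (G : (Fin s → Bool) × (Fin d → Bool) → (Fin s → Bool))
    (c : ℝ) (hc : 0 ≤ c) (q : (Fin s → Bool) → ℝ) :
    Err s d G (fun x => c * q x) = c * Err s d G q := by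
  unfold Err
  have h : ∀ z, |ErrA s d G (fun x => c * q x) z| = c * |ErrA s d G q z| := by
    intro z
    rw [ErrA_smul, abs_mul, abs_of_nonneg hc]
  simp_rw [h, ← Finset.mul_sum]
  ring

lemma sum_ErrA_zero (s d : ℕ) (G : (Fin s → Bool) × (Fin d → Bool) → (Fin s → Bool))
    (q : (Fin s → Bool) → ℝ) :
    ∑ z, ErrA s d G q z = 0 := by
  unfold ErrA
  rw [Finset.sum_sub_distrib]
  have h1 : ∑ z : Fin s → Bool,
      (∑ y : Fin d → Bool, ∑ x : Fin s → Bool, if G (x, y) = z then q x else 0) / 2 ^ d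
      = ∑ x, q x := by
    rw [← Finset.sum_div]
    rw [Finset.sum_comm]
    have h2 : ∀ y : Fin d → Bool,
        (∑ z : Fin s → Bool, ∑ x : Fin s → Bool, if G (x, y) = z then q x else 0)
        = ∑ x, q x := by
      intro y
      rw [Finset.sum_comm]
      refine Finset.sum_congr rfl fun x _ => ?_
      rw [Finset.sum_ite_eq]
      simp
    rw [Finset.sum_congr rfl fun y _ => h2 y, Finset.sum_const, Finset.card_univ, nsmul_eq_mul]
    have : ((Fintype.card (Fin d → Bool) : ℝ)) = 2 ^ d := by norm_cast; simp
    rw [this]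
    field_simp
  have h3 : ∑ _z : Fin s → Bool, (∑ x, q x) / 2 ^ s = ∑ x, q x := by
    rw [Finset.sum_const, nsmul_eq_mul, card_univ_pow]
    field_simp
  rw [h1, h3, sub_self]

lemma Err_indicator (s d : ℕ) (G : (Fin s → Bool) × (Fin d → Bool) → (Fin s → Bool))
    (β K₀ : ℝ)
    (hG : ∀ S T : Finset (Fin s → Bool), Dsum s d S T G ≤ β / 4 * (S.card + K₀) * 2 ^ d)
    (S : Finset (Fin s → Bool)) :
    Err s d G (fun x => if x ∈ S then 1 else 0) ≤ β / 4 * (S.card + K₀) := by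
  set q : (Fin s → Bool) → ℝ := fun x => if x ∈ S then 1 else 0 with hq
  set g : (Fin s → Bool) → ℝ := ErrA s d G q with hg
  set T : Finset (Fin s → Bool) := Finset.univ.filter fun z => 0 < g z with hT
  have h0 : ∑ z, g z = 0 := sum_ErrA_zero s d G q
  -- half of L1 equals positive part
  have hhalf : Err s d G q = ∑ z ∈ T, g z := by
    have hsplit := Finset.sum_filter_add_sum_filter_not Finset.univ (fun z => 0 < g z) g
    rw [h0] at hsplit
    have habs : ∑ z, |g z| = (∑ z ∈ T, g z) - ∑ z ∈ Finset.univ.filter (fun z => ¬ 0 < g z), g z := by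
      rw [← Finset.sum_filter_add_sum_filter_not Finset.univ (fun z => 0 < g z) (fun z => |g z|)]
      congr 1
      · exact Finset.sum_congr rfl fun z hz => abs_of_pos (Finset.mem_filter.mp hz).2
      · rw [← Finset.sum_neg_distrib]
        exact Finset.sum_congr rfl fun z hz =>
          abs_of_nonpos (not_lt.mp (Finset.mem_filter.mp hz).2)
    have hneg : ∑ z ∈ Finset.univ.filter (fun z => ¬ 0 < g z), g z = -∑ z ∈ T, g z := by
      linarith
    rw [Err, ← hg, habs, hneg]
    ring
  -- relate to Dsum
  have hA : ∑ z ∈ T, g z = Dsum s d S T G / 2 ^ d := by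
    have hqsum : ∑ x, q x = (S.card : ℝ) := by
      rw [hq]
      simp [Finset.sum_ite_mem]
    have hinner : ∀ (y : Fin d → Bool) (x : Fin s → Bool),
        (∑ z ∈ T, if G (x, y) = z then q x else 0) = if x ∈ S then (if G (x, y) ∈ T then (1:ℝ) else 0) else 0 := by
      intro y x
      rw [Finset.sum_ite_eq]
      by_cases h1 : G (x, y) ∈ T <;> by_cases h2 : x ∈ S <;> simp [h1, h2, hq]
    have hsum1 : ∑ z ∈ T, g z
        = (∑ y : Fin d → Bool, ∑ x : Fin s → Bool,
            if x ∈ S then (if G (x, y) ∈ T then (1:ℝ) else 0) else 0) / 2 ^ d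
          - (T.card : ℝ) * (S.card : ℝ) / 2 ^ s := by
      rw [hg]
      unfold ErrA
      rw [Finset.sum_sub_distrib, ← Finset.sum_div]
      congr 1
      · congr 1
        rw [Finset.sum_comm]
        refine Finset.sum_congr rfl fun y _ => ?_
        rw [Finset.sum_comm]
        exact Finset.sum_congr rfl fun x _ => hinner y x
      · rw [hqsum, Finset.sum_const, nsmul_eq_mul]
        ring
    have hDsum : Dsum s d S T G
        = (∑ y : Fin d → Bool, ∑ x : Fin s → Bool,
            if x ∈ S then (if G (x, y) ∈ T then (1:ℝ) else 0) else 0)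
          - (S.card : ℝ) * 2 ^ d * ((T.card : ℝ) / 2 ^ s) := by
      rw [Dsum]
      rw [Fintype.sum_prod_type]
      have hx : ∀ x : Fin s → Bool, (∑ y : Fin d → Bool, if x ∈ S then xi s T (G (x, y)) else 0)
          = (∑ y : Fin d → Bool, if x ∈ S then (if G (x, y) ∈ T then (1:ℝ) else 0) else 0)
            - (if x ∈ S then ((2:ℝ) ^ d) * ((T.card : ℝ) / 2 ^ s) else 0) := by
        intro x
        by_cases h2 : x ∈ S
        · simp only [h2, if_true]
          unfold xi
          rw [Finset.sum_sub_distrib, Finset.sum_const, Finset.card_univ, nsmul_eq_mul]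
          congr 2
          norm_cast
          simp
        · simp [h2]
      rw [Finset.sum_congr rfl fun x _ => hx x, Finset.sum_sub_distrib]
      rw [Finset.sum_comm]
      congr 1
      rw [Finset.sum_ite_mem, Finset.univ_inter, Finset.sum_const, nsmul_eq_mul]
      ring
    rw [hsum1, hDsum]
    have hd : (0:ℝ) < 2 ^ d := by positivity
    field_simp
  rw [hhalf, hA]
  have hd : (0:ℝ) < 2 ^ d := by positivity
  rw [div_le_iff₀ hd]
  exact hG S T




lemma Err_of_zero (s d : ℕ) (G : (Fin s → Bool) × (Fin d → Bool) → (Fin s → Bool))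
    (q : (Fin s → Bool) → ℝ) (hq : ∀ x, q x = 0) : Err s d G q = 0 := by
  unfold Err
  have h : ∀ z, ErrA s d G q z = 0 := by
    intro z
    unfold ErrA
    have h1 : ∀ y : Fin d → Bool, (∑ x : Fin s → Bool, if G (x, y) = z then q x else 0) = 0 := by
      intro y
      refine Finset.sum_eq_zero fun x _ => ?_
      rw [hq]
      simp
    rw [Finset.sum_congr rfl fun y _ => h1 y]
    simp [hq]
  simp [h]

lemma Err_key (s d : ℕ) (G : (Fin s → Bool) × (Fin d → Bool) → (Fin s → Bool))
    (β K₀ : ℝ) (hβ : 0 ≤ β) (hK : 0 ≤ K₀)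
    (hG : ∀ S T : Finset (Fin s → Bool), Dsum s d S T G ≤ β / 4 * (S.card + K₀) * 2 ^ d) :
    ∀ (n : ℕ) (q : (Fin s → Bool) → ℝ) (M : ℝ), (∀ x, 0 ≤ q x) → (∀ x, q x ≤ M) →
      (Finset.univ.filter fun x => q x ≠ 0).card ≤ n →
      Err s d G q ≤ β / 4 * ((∑ x, q x) + K₀ * M) := by
  intro n
  induction n with
  | zero =>
    intro q M hq0 hqM hcard
    have hempty : (Finset.univ.filter fun x => q x ≠ 0) = ∅ :=
      Finset.card_eq_zero.mp (Nat.le_zero.mp hcard)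
    have hz : ∀ x, q x = 0 := by
      intro x
      by_contra hx
      have : x ∈ (Finset.univ.filter fun x => q x ≠ 0) :=
        Finset.mem_filter.mpr ⟨Finset.mem_univ _, hx⟩
      rw [hempty] at this
      exact absurd this (Finset.notMem_empty x)
    rw [Err_of_zero s d G q hz]
    have hsum : ∑ x, q x = 0 := Finset.sum_eq_zero fun x _ => hz x
    have hM : 0 ≤ M := le_trans (hq0 (fun _ => false)) (hqM (fun _ => false))
    rw [hsum]
    have : (0:ℝ) ≤ β / 4 * (0 + K₀ * M) := by positivity
    linarith
  | succ n ih =>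
    intro q M hq0 hqM hcard
    by_cases hne : (Finset.univ.filter fun x => q x ≠ 0).Nonempty
    · set S := Finset.univ.filter fun x => q x ≠ 0 with hS
      obtain ⟨x₀, hx₀S, hx₀min⟩ := Finset.exists_min_image S q hne
      set m := q x₀ with hm
      have hm0 : 0 ≤ m := hq0 x₀
      have hmM : m ≤ M := hqM x₀
      set q' : (Fin s → Bool) → ℝ := fun x => q x - (if x ∈ S then m else 0) with hq'
      have hqnotS : ∀ x, x ∉ S → q x = 0 := by
        intro x hx
        by_contra hxx
        exact hx (Finset.mem_filter.mpr ⟨Finset.mem_univ _, hxx⟩)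
      have hq'0 : ∀ x, 0 ≤ q' x := by
        intro x
        rw [hq']
        by_cases h : x ∈ S
        · simp only [h, if_true]
          have := hx₀min x h
          linarith
        · simp only [h, if_false]
          simpa using hq0 x
      have hq'M : ∀ x, q' x ≤ M - m := by
        intro x
        rw [hq']
        by_cases h : x ∈ S
        · simp only [h, if_true]
          have := hqM x
          linarith
        · simp only [h, if_false, sub_zero]
          rw [hqnotS x h]
          linarith
      have hsupp : (Finset.univ.filter fun x => q' x ≠ 0) ⊆ S.erase x₀ := by
        intro x hx
        rw [Finset.mem_filter] at hx
        have hxS : x ∈ S := by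
          by_contra h
          apply hx.2
          rw [hq']
          simp only [h, if_false, sub_zero]
          exact hqnotS x h
        refine Finset.mem_erase.mpr ⟨?_, hxS⟩
        intro hxx
        apply hx.2
        rw [hq', hxx]
        simp only [hx₀S, if_true]
        rw [← hm]
        ring
      have hcard' : (Finset.univ.filter fun x => q' x ≠ 0).card ≤ n := by
        have h1 := Finset.card_le_card hsupp
        have h2 : (S.erase x₀).card = S.card - 1 := Finset.card_erase_of_mem hx₀S
        have h3 : 1 ≤ S.card := Finset.card_pos.mpr hne
        omega
      have hdecomp : q = fun x => m * (if x ∈ S then 1 else 0) + q' x := by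
        funext x
        rw [hq']
        by_cases h : x ∈ S <;> simp [h]
      have hErrEq : Err s d G q = Err s d G (fun x => m * (if x ∈ S then 1 else 0) + q' x) :=
        congrArg (Err s d G) hdecomp
      have hstep : Err s d G q ≤ m * (β / 4 * (S.card + K₀)) + β / 4 * ((∑ x, q' x) + K₀ * (M - m)) := by
        have hadd := Err_add_le s d G (fun x => m * (if x ∈ S then 1 else 0)) q'
        have h1 : Err s d G (fun x => m * (if x ∈ S then 1 else 0))
            = m * Err s d G (fun x => if x ∈ S then 1 else 0) := Err_smul s d G m hm0 _
        have h2 := Err_indicator s d G β K₀ hG S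
        have h3 := ih q' (M - m) hq'0 hq'M hcard'
        have h4 : Err s d G (fun x => m * (if x ∈ S then 1 else 0))
            ≤ m * (β / 4 * (S.card + K₀)) :=
          h1.le.trans (mul_le_mul_of_nonneg_left h2 hm0)
        have h5 : Err s d G (fun x => m * (if x ∈ S then 1 else 0) + q' x) ≤
            Err s d G (fun x => m * (if x ∈ S then 1 else 0)) + Err s d G q' := hadd
        linarith
      have hqsum : ∑ x, q' x = (∑ x, q x) - m * S.card := by
        rw [hq']
        rw [Finset.sum_sub_distrib]
        congr 1
        rw [Finset.sum_ite_mem, Finset.univ_inter, Finset.sum_const, nsmul_eq_mul]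
        ring
      rw [hqsum] at hstep
      have hfin : m * (β / 4 * (S.card + K₀)) + β / 4 * (((∑ x, q x) - m * S.card) + K₀ * (M - m))
          = β / 4 * ((∑ x, q x) + K₀ * M) := by ring
      linarith
    · rw [Finset.not_nonempty_iff_eq_empty] at hne
      have hz : ∀ x, q x = 0 := by
        intro x
        by_contra hx
        have : x ∈ (Finset.univ.filter fun x => q x ≠ 0) :=
          Finset.mem_filter.mpr ⟨Finset.mem_univ _, hx⟩
        rw [hne] at this
        exact absurd this (Finset.notMem_empty x)
      rw [Err_of_zero s d G q hz]
      have hsum : ∑ x, q x = 0 := Finset.sum_eq_zero fun x _ => hz x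
      have hM : 0 ≤ M := le_trans (hq0 (fun _ => false)) (hqM (fun _ => false))
      rw [hsum]
      have : (0:ℝ) ≤ β / 4 * (0 + K₀ * M) := by positivity
      linarith



lemma prMass_eq {Ω : Type} [Fintype Ω] (p : Ω → ℝ) (P : Ω → Prop) [DecidablePred P] :
    prMass p P = ∑ ω, if P ω then p ω else 0 := by
  unfold prMass
  rw [Finset.sum_filter]
  exact Finset.sum_congr rfl fun ω _ => by by_cases h : P ω <;> simp [h]

lemma prMass_nonneg {Ω : Type} [Fintype Ω] {p : Ω → ℝ} (hp : ∀ ω, 0 ≤ p ω) (P : Ω → Prop) :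
    0 ≤ prMass p P := by
  unfold prMass
  exact Finset.sum_nonneg fun ω _ => hp ω

lemma isAvgExtractor_of_good (s d : ℕ) (β K₀ κ : ℝ) (hβ : 0 < β) (hK : 0 ≤ K₀)
    (G : (Fin s → Bool) × (Fin d → Bool) → (Fin s → Bool))
    (hG : ∀ S T : Finset (Fin s → Bool), Dsum s d S T G ≤ β / 4 * (S.card + K₀) * 2 ^ d)
    (hκ : K₀ * (2:ℝ) ^ (-κ) ≤ 1) :
    IsAvgExtractor s d s κ β (fun x y => G (x, y)) := by
  intro Ω _ Vt _ p X V hp0 hp1 hent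
  classical
  set q : Vt → (Fin s → Bool) → ℝ :=
    fun v x => prMass p (fun ω => X ω = x ∧ V ω = v) with hqdef
  -- sub-lemma A
  have hA : ∀ v : Vt, prMass p (fun ω => V ω = v) = ∑ x, q v x := by
    intro v
    rw [prMass_eq]
    have : ∀ x, q v x = ∑ ω, if X ω = x ∧ V ω = v then p ω else 0 := by
      intro x; rw [hqdef]; exact prMass_eq p _
    rw [Finset.sum_congr rfl fun x _ => this x, Finset.sum_comm]
    refine Finset.sum_congr rfl fun ω _ => ?_
    have h1 : ∀ x : Fin s → Bool, (if X ω = x ∧ V ω = v then p ω else 0)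
        = if X ω = x then (if V ω = v then p ω else 0) else 0 := by
      intro x
      by_cases h1 : X ω = x <;> by_cases h2 : V ω = v <;> simp [h1, h2]
    rw [Finset.sum_congr rfl fun x _ => h1 x, Finset.sum_ite_eq]
    simp
  -- sub-lemma B
  have hB : ∀ (v : Vt) (y : Fin d → Bool) (z : Fin s → Bool),
      prMass p (fun ω => V ω = v ∧ G (X ω, y) = z)
      = ∑ x, if G (x, y) = z then q v x else 0 := by
    intro v y z
    have hq' : ∀ x, (if G (x, y) = z then q v x else 0)
        = ∑ ω, if G (x, y) = z then (if X ω = x ∧ V ω = v then p ω else 0) else 0 := by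
      intro x
      by_cases h : G (x, y) = z
      · simp only [h, if_true]
        rw [hqdef]; exact prMass_eq p _
      · simp [h]
    rw [Finset.sum_congr rfl fun x _ => hq' x, Finset.sum_comm, prMass_eq]
    refine Finset.sum_congr rfl fun ω _ => ?_
    rw [Finset.sum_eq_single (X ω)]
    · by_cases h1 : G (X ω, y) = z <;> by_cases h2 : V ω = v <;> simp [h1, h2]
    · intro x _ hx
      have : ¬ (X ω = x ∧ V ω = v) := fun hh => hx (hh.1.symm)
      by_cases h : G (x, y) = z <;> simp [h, this]
    · intro h
      exact absurd (Finset.mem_univ (X ω)) h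
  -- total mass
  have htot : ∑ v : Vt, prMass p (fun ω => V ω = v) = 1 := by
    have : ∀ v, prMass p (fun ω => V ω = v) = ∑ ω, if V ω = v then p ω else 0 := by
      intro v; exact prMass_eq p _
    rw [Finset.sum_congr rfl fun v _ => this v, Finset.sum_comm]
    rw [← hp1]
    refine Finset.sum_congr rfl fun ω _ => ?_
    rw [Finset.sum_ite_eq]
    simp
  -- rewrite goal as sum of Err
  have hgoal : (1 / 2 : ℝ) * ∑ v : Vt, ∑ z : Fin s → Bool,
      |(∑ y : Fin d → Bool, prMass p (fun ω => V ω = v ∧ G (X ω, y) = z)) / 2 ^ d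
        - prMass p (fun ω => V ω = v) / 2 ^ s|
      = ∑ v : Vt, Err s d G (q v) := by
    rw [Finset.mul_sum]
    refine Finset.sum_congr rfl fun v _ => ?_
    rw [Err]
    rw [show (1/2 : ℝ) = 2⁻¹ by norm_num, Finset.mul_sum, Finset.mul_sum]
    refine Finset.sum_congr rfl fun z _ => ?_
    congr 1
    rw [ErrA]
    rw [Finset.sum_congr rfl fun y _ => hB v y z, hA v]
  -- bound each Err
  have hM : ∀ v : Vt, ∀ x, q v x ≤ ⨆ x', q v x' := by
    intro v x
    exact le_ciSup (Set.Finite.bddAbove (Set.finite_range _)) x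
  have hq0 : ∀ v x, 0 ≤ q v x := fun v x => prMass_nonneg hp0 _
  have hbound : ∀ v : Vt, Err s d G (q v)
      ≤ β / 4 * ((∑ x, q v x) + K₀ * (⨆ x', q v x')) := by
    intro v
    exact Err_key s d G β K₀ hβ.le hK hG (Fintype.card (Fin s → Bool)) (q v) _
      (hq0 v) (hM v) (by
        calc (Finset.univ.filter fun x => q v x ≠ 0).card
            ≤ (Finset.univ : Finset (Fin s → Bool)).card := Finset.card_filter_le _ _
          _ = Fintype.card (Fin s → Bool) := Finset.card_univ)
  -- combine
  have hMsum : ∑ v : Vt, (⨆ x', q v x') ≤ (2:ℝ) ^ (-κ) := by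
    simpa only [hqdef] using hent
  have hsum1 : ∑ v : Vt, ∑ x, q v x = 1 := by
    rw [← htot]
    exact Finset.sum_congr rfl fun v _ => (hA v).symm
  calc (1 / 2 : ℝ) * ∑ v : Vt, ∑ z : Fin s → Bool,
      |(∑ y : Fin d → Bool, prMass p (fun ω => V ω = v ∧ G (X ω, y) = z)) / 2 ^ d
        - prMass p (fun ω => V ω = v) / 2 ^ s|
      = ∑ v : Vt, Err s d G (q v) := hgoal
    _ ≤ ∑ v : Vt, β / 4 * ((∑ x, q v x) + K₀ * (⨆ x', q v x')) :=
        Finset.sum_le_sum fun v _ => hbound v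
    _ = β / 4 * ((∑ v : Vt, ∑ x, q v x) + K₀ * ∑ v : Vt, (⨆ x', q v x')) := by
        simp only [mul_add, Finset.mul_sum, Finset.sum_add_distrib, mul_assoc]
    _ ≤ β / 4 * (1 + 1) := by
        have h1 : K₀ * ∑ v : Vt, (⨆ x', q v x') ≤ 1 := by
          calc K₀ * ∑ v : Vt, (⨆ x', q v x') ≤ K₀ * (2:ℝ) ^ (-κ) :=
              mul_le_mul_of_nonneg_left hMsum hK
            _ ≤ 1 := hκ
        rw [hsum1]
        have : (0:ℝ) ≤ β / 4 := by positivity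
        nlinarith
    _ ≤ β := by linarith



end AvgExtAux

/-- there is an absolute constant `C > 0` such that for all naturals
`t ≤ s` and every `0 < β ≤ 1` there exists an average-case `(s−t, β)`-extractor
`Ext : {0,1}^s × {0,1}^d → {0,1}^s` with seed length `d ≤ C·(t + log₂(1/β) + 1)`. -/
theorem avg_extractor_exists :
    ∃ C : ℝ, 0 < C ∧
      ∀ s t : ℕ, t ≤ s → ∀ β : ℝ, 0 < β → β ≤ 1 →
        ∃ d : ℕ, (d : ℝ) ≤ C * ((t : ℝ) + Real.logb 2 (1 / β) + 1) ∧
          ∃ Ext : (Fin s → Bool) → (Fin d → Bool) → (Fin s → Bool),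
            IsAvgExtractor s d s ((s : ℝ) - (t : ℝ)) β Ext := by
  refine ⟨6, by norm_num, ?_⟩
  intro s t hts β hβ0 hβ1
  set L : ℝ := Real.logb 2 (1 / β) with hL
  have hinv1 : (1:ℝ) ≤ 1 / β := by
    rw [le_div_iff₀ hβ0]; linarith
  have hL0 : 0 ≤ L := Real.logb_nonneg (by norm_num) hinv1
  set D : ℕ := t + 5 + Nat.ceil (2 * L) with hD
  have hdle : (D : ℝ) ≤ 6 * ((t:ℝ) + L + 1) := by
    have hceil : ((Nat.ceil (2*L) : ℕ) : ℝ) < 2*L + 1 := Nat.ceil_lt_add_one (by linarith)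
    have ht0 : (0:ℝ) ≤ t := Nat.cast_nonneg t
    have : (D : ℝ) = (t:ℝ) + 5 + ((Nat.ceil (2*L) : ℕ) : ℝ) := by
      rw [hD]; push_cast; ring
    rw [this]
    nlinarith
  refine ⟨D, hdle, ?_⟩
  set K₀ : ℝ := 2 ^ s / 2 ^ t with hK₀
  have hK0 : 0 < K₀ := by positivity
  -- 2^D is large enough
  have hpow : (32:ℝ) * 2 ^ t / β ^ 2 ≤ 2 ^ D := by
    have h1 : (2:ℝ) ^ D = 2 ^ t * 2 ^ 5 * 2 ^ (Nat.ceil (2*L)) := by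
      rw [hD, pow_add, pow_add]
    have e4 : (2:ℝ) ^ (L:ℝ) = 1/β :=
      Real.rpow_logb (by norm_num) (by norm_num) (by positivity)
    have e3 : (2:ℝ) ^ (2*L : ℝ) = ((1:ℝ)/β) ^ (2:ℕ) := by
      rw [show (2*L : ℝ) = L * 2 by ring, Real.rpow_mul (by norm_num), e4]
      rw [← Real.rpow_natCast (1/β) 2]
      norm_num
    have e2 : (2:ℝ) ^ (2*L : ℝ) ≤ (2:ℝ) ^ ((Nat.ceil (2*L) : ℕ) : ℝ) :=
      Real.rpow_le_rpow_of_exponent_le one_le_two (Nat.le_ceil _)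
    have e1 : (2:ℝ) ^ ((Nat.ceil (2*L) : ℕ) : ℝ) = (2:ℝ) ^ (Nat.ceil (2*L) : ℕ) :=
      Real.rpow_natCast 2 _
    have h2 : ((1:ℝ)/β) ^ (2:ℕ) ≤ (2:ℝ) ^ (Nat.ceil (2*L) : ℕ) := by
      rw [← e3, ← e1]; exact e2
    have hb2 : (0:ℝ) < β ^ 2 := by positivity
    have ht2 : (0:ℝ) < (2:ℝ) ^ t := by positivity
    rw [h1]
    rw [div_le_iff₀ hb2]
    have expand : ((1:ℝ)/β)^(2:ℕ) * β ^ 2 = 1 := by field_simp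
    calc (32:ℝ) * 2 ^ t = 2 ^ t * 2 ^ 5 * (((1:ℝ)/β)^(2:ℕ) * β ^ 2) := by
          rw [expand]; ring
      _ ≤ 2 ^ t * 2 ^ 5 * ((2:ℝ) ^ (Nat.ceil (2*L) : ℕ) * β ^ 2) := by
          have : ((1:ℝ)/β)^(2:ℕ) * β ^ 2 ≤ (2:ℝ) ^ (Nat.ceil (2*L) : ℕ) * β ^ 2 :=
            mul_le_mul_of_nonneg_right h2 hb2.le
          nlinarith [this, ht2]
      _ = 2 ^ t * 2 ^ 5 * (2:ℝ) ^ (Nat.ceil (2*L) : ℕ) * β ^ 2 := by ring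
  -- the exponent bound
  have hE : (4:ℝ) * 2 ^ s ≤ β ^ 2 * K₀ * 2 ^ D / 8 := by
    have hc : (0:ℝ) ≤ β ^ 2 * K₀ / 8 := by positivity
    have h := mul_le_mul_of_nonneg_left hpow hc
    have he : β ^ 2 * K₀ / 8 * ((32:ℝ) * 2 ^ t / β ^ 2) = 4 * 2 ^ s := by
      rw [hK₀]; field_simp; ring
    have he2 : β ^ 2 * K₀ / 8 * (2:ℝ) ^ D = β ^ 2 * K₀ * 2 ^ D / 8 := by ring
    linarith [he ▸ (he2 ▸ h)]
  have hcond : ((2 : ℝ) ^ (2 ^ s) * (2 : ℝ) ^ (2 ^ s)) *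
      Real.exp (-(β ^ 2 * K₀ * 2 ^ D / 8)) < 1 := by
    have h2n : (2:ℝ) ^ (2 ^ s : ℕ) ≤ Real.exp ((2:ℝ) ^ s) := by
      have h2e : (2:ℝ) ≤ Real.exp 1 := by linarith [Real.add_one_le_exp (1:ℝ)]
      calc (2:ℝ) ^ (2 ^ s : ℕ) ≤ Real.exp 1 ^ (2 ^ s : ℕ) :=
            pow_le_pow_left₀ (by norm_num) h2e _
        _ = Real.exp (((2:ℕ) ^ s : ℕ) * 1) := (Real.exp_nat_mul 1 _).symm
        _ = Real.exp ((2:ℝ) ^ s) := by push_cast; ring_nf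
    have hexp : Real.exp (-(β ^ 2 * K₀ * 2 ^ D / 8)) ≤ Real.exp (-(4 * (2:ℝ) ^ s)) :=
      Real.exp_le_exp.mpr (by linarith)
    have hpos1 : (0:ℝ) ≤ (2:ℝ) ^ (2 ^ s : ℕ) := by positivity
    calc ((2 : ℝ) ^ (2 ^ s) * (2 : ℝ) ^ (2 ^ s)) * Real.exp (-(β ^ 2 * K₀ * 2 ^ D / 8))
        ≤ (Real.exp ((2:ℝ) ^ s) * Real.exp ((2:ℝ) ^ s)) * Real.exp (-(4 * (2:ℝ) ^ s)) := by
          refine mul_le_mul ?_ hexp (Real.exp_pos _).le (by positivity)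
          exact mul_le_mul h2n h2n hpos1 (Real.exp_pos _).le
      _ = Real.exp ((2:ℝ) ^ s + (2:ℝ) ^ s + -(4 * (2:ℝ) ^ s)) := by
          rw [← Real.exp_add, ← Real.exp_add]
      _ < 1 := by
          rw [Real.exp_lt_one_iff]
          have : (0:ℝ) < (2:ℝ) ^ s := by positivity
          linarith
  obtain ⟨G, hG⟩ := AvgExtAux.exists_good s D β K₀ hβ0 hK0 hcond
  have hκ : K₀ * (2:ℝ) ^ (-((s:ℝ) - (t:ℝ))) ≤ 1 := by
    have hrw : (2:ℝ) ^ (-((s:ℝ) - (t:ℝ))) = (2:ℝ) ^ (t:ℕ) / (2:ℝ) ^ (s:ℕ) := by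
      rw [← Real.rpow_natCast 2 t, ← Real.rpow_natCast 2 s, ← Real.rpow_sub (by norm_num)]
      congr 1
      ring
    rw [hrw, hK₀]
    have h1 : (0:ℝ) < (2:ℝ) ^ s := by positivity
    have h2 : (0:ℝ) < (2:ℝ) ^ t := by positivity
    rw [div_mul_div_comm]
    rw [div_le_one (by positivity)]
    ring_nf
    exact le_refl _
  exact ⟨fun x y => G (x, y),
    AvgExtAux.isAvgExtractor_of_good s D β K₀ ((s:ℝ) - (t:ℝ)) hβ0 hK0.le G hG hκ⟩
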